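/- Let k be a symmetric positive-semidefinite kernel on ℝ^d that is Lipschitz with constant L_k > 0 and uniformly bounded, |k(z,z')| ≤ k̄ for all z, z', let x^(1),…,x^(N) be training inputs and σ_n² > 0 a noise variance. Then the Gaussian process posterior variance σ_N²(·) is Lipschitz continuous with |σ_N²(x) − σ_N²(x')| ≤ 2 L_k ( 1 + N ‖(K_N + σ_n² I_N)⁻¹‖ · k̄ ) ‖x − x'‖ for all x, x' ∈ ℝ^d, where ‖(K_N + σ_n² I_N)⁻¹‖ is the operator norm of the inverse data covariance matrix. -/

import Mathlib

open Matrix RealInnerProductSpace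

lemma euclid_norm_le {N : ℕ} (f : Fin N → ℝ) (c : ℝ) (hc : 0 ≤ c)
    (h : ∀ i, |f i| ≤ c) :
    ‖(WithLp.equiv 2 (Fin N → ℝ)).symm f‖ ≤ Real.sqrt N * c := by
  rw [EuclideanSpace.norm_eq]
  have : ∑ i, ‖(WithLp.equiv 2 (Fin N → ℝ)).symm f i‖ ^ 2 ≤ ∑ _i : Fin N, c ^ 2 := by
    refine Finset.sum_le_sum fun i _ => ?_
    have := h i
    have : ‖f i‖ ≤ c := by rwa [Real.norm_eq_abs]
    calc ‖(WithLp.equiv 2 (Fin N → ℝ)).symm f i‖ ^ 2 = ‖f i‖ ^ 2 := rfl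
    _ ≤ c ^ 2 := by nlinarith [norm_nonneg (f i)]
  calc Real.sqrt (∑ i, ‖(WithLp.equiv 2 (Fin N → ℝ)).symm f i‖ ^ 2)
      ≤ Real.sqrt (∑ _i : Fin N, c ^ 2) := Real.sqrt_le_sqrt this
    _ = Real.sqrt (N * c ^ 2) := by rw [Finset.sum_const, Finset.card_fin, nsmul_eq_mul]
    _ = Real.sqrt N * c := by
        rw [Real.sqrt_mul (Nat.cast_nonneg N), Real.sqrt_sq hc]

lemma dot_mulVec_bound {N : ℕ} (B : Matrix (Fin N) (Fin N) ℝ) (w u : Fin N → ℝ) :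
    |w ⬝ᵥ (B *ᵥ u)| ≤ ‖Matrix.toEuclideanCLM (𝕜 := ℝ) B‖ *
      ‖(WithLp.equiv 2 (Fin N → ℝ)).symm w‖ * ‖(WithLp.equiv 2 (Fin N → ℝ)).symm u‖ := by
  set e := (WithLp.equiv 2 (Fin N → ℝ)).symm
  have key : w ⬝ᵥ (B *ᵥ u) = ⟪e w, Matrix.toEuclideanCLM (𝕜 := ℝ) B (e u)⟫ := by
    change w ⬝ᵥ (B *ᵥ u) = (B *ᵥ u) ⬝ᵥ star w
    rw [star_trivial]
    exact dotProduct_comm _ _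
  rw [key]
  calc |⟪e w, Matrix.toEuclideanCLM (𝕜 := ℝ) B (e u)⟫|
      ≤ ‖e w‖ * ‖Matrix.toEuclideanCLM (𝕜 := ℝ) B (e u)‖ := abs_real_inner_le_norm _ _
    _ ≤ ‖e w‖ * (‖Matrix.toEuclideanCLM (𝕜 := ℝ) B‖ * ‖e u‖) := by
        gcongr; exact ContinuousLinearMap.le_opNorm _ _
    _ = ‖Matrix.toEuclideanCLM (𝕜 := ℝ) B‖ * ‖e w‖ * ‖e u‖ := by ring

/-- The GP posterior variance is Lipschitz with constant
2 L_k (1 + N ‖(K_N + σ_n² I)⁻¹‖ k̄). -/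
theorem gp_posterior_variance_lipschitz
    (d N : ℕ) (hN : 1 ≤ N)
    (X : Fin N → EuclideanSpace ℝ (Fin d))
    (σn2 : ℝ) (hσ : 0 < σn2)
    (k : EuclideanSpace ℝ (Fin d) → EuclideanSpace ℝ (Fin d) → ℝ)
    (hsymm : ∀ x y, k x y = k y x)
    (hpsd : ∀ (m : ℕ) (z : Fin m → EuclideanSpace ℝ (Fin d)),
      (Matrix.of fun i j => k (z i) (z j)).PosSemidef)
    (Lk : ℝ) (hLk : 0 < Lk)
    (hlip : ∀ x y z, |k x z - k y z| ≤ Lk * ‖x - y‖)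
    (kbar : ℝ) (hbdd : ∀ z z', |k z z'| ≤ kbar) :
    letI K : Matrix (Fin N) (Fin N) ℝ := Matrix.of fun i j => k (X i) (X j)
    letI A : Matrix (Fin N) (Fin N) ℝ := K + σn2 • (1 : Matrix (Fin N) (Fin N) ℝ)
    letI σ2 : EuclideanSpace ℝ (Fin d) → ℝ := fun x =>
      k x x - (fun i => k x (X i)) ⬝ᵥ (A⁻¹ *ᵥ fun i => k x (X i))
    ∀ x x' : EuclideanSpace ℝ (Fin d),
      |σ2 x - σ2 x'| ≤
        2 * Lk * (1 + N * ‖Matrix.toEuclideanCLM (𝕜 := ℝ) A⁻¹‖ * kbar) * ‖x - x'‖ := by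
  intro x x'
  set B := ((Matrix.of fun i j => k (X i) (X j)) + σn2 • (1 : Matrix (Fin N) (Fin N) ℝ))⁻¹ with hB
  set e := (WithLp.equiv 2 (Fin N → ℝ)).symm with he
  set v : EuclideanSpace ℝ (Fin d) → Fin N → ℝ := fun y i => k y (X i) with hv
  have hkbar : 0 ≤ kbar := le_trans (abs_nonneg _) (hbdd x x)
  have hxx : 0 ≤ ‖x - x'‖ := norm_nonneg _
  -- bound on ‖e (v y)‖
  have hvb : ∀ y, ‖e (v y)‖ ≤ Real.sqrt N * kbar := fun y =>
    euclid_norm_le _ _ hkbar (fun i => hbdd y (X i))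
  -- bound on ‖e (v x - v x')‖
  have hvd : ‖e (v x - v x')‖ ≤ Real.sqrt N * (Lk * ‖x - x'‖) := by
    refine euclid_norm_le _ _ (by positivity) fun i => ?_
    exact hlip x x' (X i)
  -- first term
  have h1 : |k x x - k x' x'| ≤ 2 * Lk * ‖x - x'‖ := by
    have a1 : |k x x - k x' x| ≤ Lk * ‖x - x'‖ := hlip x x' x
    have a2 : |k x' x - k x' x'| ≤ Lk * ‖x - x'‖ := by
      rw [hsymm x' x, hsymm x' x']
      exact hlip x x' x'
    calc |k x x - k x' x'| = |(k x x - k x' x) + (k x' x - k x' x')| := by ring_nf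
      _ ≤ |k x x - k x' x| + |k x' x - k x' x'| := abs_add_le _ _
      _ ≤ Lk * ‖x - x'‖ + Lk * ‖x - x'‖ := add_le_add a1 a2
      _ = 2 * Lk * ‖x - x'‖ := by ring
  -- second term decomposition
  have hdecomp : v x ⬝ᵥ (B *ᵥ v x) - v x' ⬝ᵥ (B *ᵥ v x') =
      (v x - v x') ⬝ᵥ (B *ᵥ v x) + v x' ⬝ᵥ (B *ᵥ (v x - v x')) := by
    simp [sub_dotProduct, dotProduct_sub, Matrix.mulVec_sub]
  have hNB : 0 ≤ ‖Matrix.toEuclideanCLM (𝕜 := ℝ) B‖ := norm_nonneg _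
  have hsq : Real.sqrt N * Real.sqrt N = (N : ℝ) :=
    Real.mul_self_sqrt (Nat.cast_nonneg N)
  have hb1 : |(v x - v x') ⬝ᵥ (B *ᵥ v x)| ≤
      ‖Matrix.toEuclideanCLM (𝕜 := ℝ) B‖ * (N * kbar * (Lk * ‖x - x'‖)) := by
    calc |(v x - v x') ⬝ᵥ (B *ᵥ v x)|
        ≤ ‖Matrix.toEuclideanCLM (𝕜 := ℝ) B‖ * ‖e (v x - v x')‖ * ‖e (v x)‖ :=
          dot_mulVec_bound B _ _
      _ ≤ ‖Matrix.toEuclideanCLM (𝕜 := ℝ) B‖ * (Real.sqrt N * (Lk * ‖x - x'‖)) *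
            (Real.sqrt N * kbar) := by
          gcongr <;> first | exact hvd | exact hvb _
      _ = ‖Matrix.toEuclideanCLM (𝕜 := ℝ) B‖ * ((Real.sqrt N * Real.sqrt N) * kbar *
            (Lk * ‖x - x'‖)) := by ring
      _ = ‖Matrix.toEuclideanCLM (𝕜 := ℝ) B‖ * (N * kbar * (Lk * ‖x - x'‖)) := by
          rw [hsq]
  have hb2 : |v x' ⬝ᵥ (B *ᵥ (v x - v x'))| ≤
      ‖Matrix.toEuclideanCLM (𝕜 := ℝ) B‖ * (N * kbar * (Lk * ‖x - x'‖)) := by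
    calc |v x' ⬝ᵥ (B *ᵥ (v x - v x'))|
        ≤ ‖Matrix.toEuclideanCLM (𝕜 := ℝ) B‖ * ‖e (v x')‖ * ‖e (v x - v x')‖ :=
          dot_mulVec_bound B _ _
      _ ≤ ‖Matrix.toEuclideanCLM (𝕜 := ℝ) B‖ * (Real.sqrt N * kbar) *
            (Real.sqrt N * (Lk * ‖x - x'‖)) := by
          gcongr <;> first | exact hvd | exact hvb _
      _ = ‖Matrix.toEuclideanCLM (𝕜 := ℝ) B‖ * ((Real.sqrt N * Real.sqrt N) * kbar *
            (Lk * ‖x - x'‖)) := by ring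
      _ = ‖Matrix.toEuclideanCLM (𝕜 := ℝ) B‖ * (N * kbar * (Lk * ‖x - x'‖)) := by
          rw [hsq]
  have h2 : |v x ⬝ᵥ (B *ᵥ v x) - v x' ⬝ᵥ (B *ᵥ v x')| ≤
      2 * ‖Matrix.toEuclideanCLM (𝕜 := ℝ) B‖ * (N * kbar * (Lk * ‖x - x'‖)) := by
    rw [hdecomp]
    calc |(v x - v x') ⬝ᵥ (B *ᵥ v x) + v x' ⬝ᵥ (B *ᵥ (v x - v x'))|
        ≤ |(v x - v x') ⬝ᵥ (B *ᵥ v x)| + |v x' ⬝ᵥ (B *ᵥ (v x - v x'))| := abs_add_le _ _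
      _ ≤ _ := by linarith [hb1, hb2]
  show |(k x x - v x ⬝ᵥ (B *ᵥ v x)) - (k x' x' - v x' ⬝ᵥ (B *ᵥ v x'))| ≤
      2 * Lk * (1 + N * ‖Matrix.toEuclideanCLM (𝕜 := ℝ) B‖ * kbar) * ‖x - x'‖
  have hrw : (k x x - v x ⬝ᵥ (B *ᵥ v x)) - (k x' x' - v x' ⬝ᵥ (B *ᵥ v x')) =
      (k x x - k x' x') - (v x ⬝ᵥ (B *ᵥ v x) - v x' ⬝ᵥ (B *ᵥ v x')) := by ring
  rw [hrw]
  calc |(k x x - k x' x') - (v x ⬝ᵥ (B *ᵥ v x) - v x' ⬝ᵥ (B *ᵥ v x'))|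
      ≤ |k x x - k x' x'| + |v x ⬝ᵥ (B *ᵥ v x) - v x' ⬝ᵥ (B *ᵥ v x')| := abs_sub _ _
    _ ≤ 2 * Lk * ‖x - x'‖ +
        2 * ‖Matrix.toEuclideanCLM (𝕜 := ℝ) B‖ * (N * kbar * (Lk * ‖x - x'‖)) :=
        add_le_add h1 h2
    _ = 2 * Lk * (1 + N * ‖Matrix.toEuclideanCLM (𝕜 := ℝ) B‖ * kbar) * ‖x - x'‖ := by ring
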